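/- Let n be a natural number with n ≥ 1 and let x be a real number with 0 < x and (n+1)·x ≤ 1/2. Then the series Σ_{l=n+2}^{∞} x^l · n! · ( n^{−n} (n+1)^{l−1} + (3/2)·(l−1)! / ( n! (l−n)! ) ) converges and its sum is at most (2e + 3/2) · (n+1)! · x^{n+2}, where e is Euler's number. -/

import Mathlib

private lemma aux_b (n : ℕ) (hn : 1 ≤ n) (x : ℝ) (hx : 0 < x)
    (hnx : (n + 1 : ℝ) * x ≤ 1 / 2) (l : ℕ) :
    x ^ l * (Nat.factorial (n + 1 + l) : ℝ) / (Nat.factorial (l + 2) : ℝ)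
      ≤ (Nat.factorial (n + 1) : ℝ) / 2 * (1 / 4) ^ l := by
  have hn1 : (1 : ℝ) ≤ n := by exact_mod_cast hn
  induction l with
  | zero => simp [Nat.factorial]
  | succ l ih =>
    have h1 : (Nat.factorial (n + 1 + (l + 1)) : ℝ)
        = ((n : ℝ) + 2 + l) * Nat.factorial (n + 1 + l) := by
      have e : n + 1 + (l + 1) = (n + 1 + l) + 1 := by ring
      rw [e, Nat.factorial_succ]; push_cast; ring
    have h2 : (Nat.factorial (l + 1 + 2) : ℝ) = ((l : ℝ) + 3) * Nat.factorial (l + 2) := by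
      have e : l + 1 + 2 = (l + 2) + 1 := by ring
      rw [e, Nat.factorial_succ]; push_cast; ring
    have hG : (0 : ℝ) < (Nat.factorial (l + 2) : ℝ) := by
      exact_mod_cast Nat.factorial_pos (l + 2)
    have hl3 : (0 : ℝ) < (l : ℝ) + 3 := by positivity
    have hx4 : x ≤ 1 / 4 := by nlinarith
    have hratio : x * ((n : ℝ) + 2 + l) / ((l : ℝ) + 3) ≤ 1 / 4 := by
      rw [div_le_iff₀ hl3]
      nlinarith [mul_le_mul_of_nonneg_left hx4 (show (0:ℝ) ≤ 4 * ((l:ℝ)+1) by positivity)]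
    have hLnn : 0 ≤ x ^ l * (Nat.factorial (n + 1 + l) : ℝ) / (Nat.factorial (l + 2) : ℝ) := by
      positivity
    have heq : x ^ (l + 1) * (Nat.factorial (n + 1 + (l + 1)) : ℝ) / (Nat.factorial (l + 1 + 2) : ℝ)
        = (x * ((n : ℝ) + 2 + l) / ((l : ℝ) + 3)) *
          (x ^ l * (Nat.factorial (n + 1 + l) : ℝ) / (Nat.factorial (l + 2) : ℝ)) := by
      rw [h1, h2]; field_simp; ring
    rw [heq]
    calc (x * ((n : ℝ) + 2 + l) / ((l : ℝ) + 3)) *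
          (x ^ l * (Nat.factorial (n + 1 + l) : ℝ) / (Nat.factorial (l + 2) : ℝ))
        ≤ (1 / 4) * ((Nat.factorial (n + 1) : ℝ) / 2 * (1 / 4) ^ l) := by
          apply mul_le_mul hratio ih hLnn (by norm_num)
      _ = (Nat.factorial (n + 1) : ℝ) / 2 * (1 / 4) ^ (l + 1) := by ring

theorem stmt_10 (n : ℕ) (hn : 1 ≤ n) (x : ℝ) (hx : 0 < x)
    (hnx : (n + 1 : ℝ) * x ≤ 1 / 2) :
    Summable (fun l : ℕ =>
      x ^ (n + 2 + l) * (Nat.factorial n : ℝ) *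
        ((n : ℝ) ^ (-(n : ℤ)) * (n + 1 : ℝ) ^ (n + 2 + l - 1) +
          (3 / 2 : ℝ) * (Nat.factorial (n + 2 + l - 1) : ℝ) /
            ((Nat.factorial n : ℝ) * (Nat.factorial (n + 2 + l - n) : ℝ)))) ∧
    (∑' l : ℕ,
      x ^ (n + 2 + l) * (Nat.factorial n : ℝ) *
        ((n : ℝ) ^ (-(n : ℤ)) * (n + 1 : ℝ) ^ (n + 2 + l - 1) +
          (3 / 2 : ℝ) * (Nat.factorial (n + 2 + l - 1) : ℝ) /
            ((Nat.factorial n : ℝ) * (Nat.factorial (n + 2 + l - n) : ℝ))))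
      ≤ (2 * Real.exp 1 + 3 / 2) * (Nat.factorial (n + 1) : ℝ) * x ^ (n + 2) := by
  have hn1 : (1 : ℝ) ≤ n := by exact_mod_cast hn
  have hnpos : (0 : ℝ) < n := by linarith
  set f : ℕ → ℝ := fun l =>
      x ^ (n + 2 + l) * (Nat.factorial n : ℝ) *
        ((n : ℝ) ^ (-(n : ℤ)) * (n + 1 : ℝ) ^ (n + 2 + l - 1) +
          (3 / 2 : ℝ) * (Nat.factorial (n + 2 + l - 1) : ℝ) /
            ((Nat.factorial n : ℝ) * (Nat.factorial (n + 2 + l - n) : ℝ))) with hf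
  set C : ℝ := (Nat.factorial (n + 1) : ℝ) * x ^ (n + 2) with hC
  have hCpos : 0 < C := by
    have := Nat.factorial_pos (n + 1)
    have : (0 : ℝ) < (Nat.factorial (n + 1) : ℝ) := by exact_mod_cast this
    positivity
  set g : ℕ → ℝ := fun l => Real.exp 1 * C * (1 / 2) ^ l + 3 / 4 * C * (1 / 4) ^ l with hg
  have hzpow : (n : ℝ) ^ (-(n : ℤ)) = ((n : ℝ) ^ n)⁻¹ := by
    rw [zpow_neg, zpow_natCast]
  have hfnn : ∀ l, 0 ≤ f l := by
    intro l
    have h1 : (0:ℝ) ≤ (n : ℝ) ^ (-(n : ℤ)) := by rw [hzpow]; positivity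
    have h2 : (0:ℝ) < (Nat.factorial n : ℝ) := by exact_mod_cast Nat.factorial_pos n
    have h3 : (0:ℝ) ≤ (Nat.factorial (n + 2 + l - 1) : ℝ) := by positivity
    have h4 : (0:ℝ) ≤ (Nat.factorial (n + 2 + l - n) : ℝ) := by positivity
    simp only [hf]
    positivity
  -- key estimate on the first part constant
  have hA : (Nat.factorial n : ℝ) * ((n : ℝ) ^ n)⁻¹ * ((n : ℝ) + 1) ^ (n + 1)
      ≤ Real.exp 1 * (Nat.factorial (n + 1) : ℝ) := by
    have hstep : ((n : ℝ) + 1) ^ n ≤ Real.exp 1 * (n : ℝ) ^ n := by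
      have h1 : (n : ℝ) + 1 ≤ (n : ℝ) * Real.exp (1 / n) := by
        have h := mul_le_mul_of_nonneg_left (Real.add_one_le_exp (1 / (n : ℝ))) hnpos.le
        have he : (n : ℝ) * (1 / (n : ℝ) + 1) = (n : ℝ) + 1 := by field_simp; ring
        rw [he] at h; exact h
      have h2 : ((n : ℝ) + 1) ^ n ≤ ((n : ℝ) * Real.exp (1 / n)) ^ n :=
        pow_le_pow_left₀ (by positivity) h1 n
      have h3 : ((n : ℝ) * Real.exp (1 / n)) ^ n = (n : ℝ) ^ n * Real.exp (1 / n) ^ n := by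
        rw [mul_pow]
      have h4 : Real.exp (1 / (n : ℝ)) ^ n = Real.exp 1 := by
        rw [← Real.exp_nat_mul]
        congr 1
        field_simp
      rw [h3, h4] at h2
      linarith
    have hfact : (Nat.factorial (n + 1) : ℝ) = ((n : ℝ) + 1) * Nat.factorial n := by
      rw [Nat.factorial_succ]; push_cast; ring
    have hpow : ((n : ℝ) + 1) ^ (n + 1) = ((n : ℝ) + 1) * ((n : ℝ) + 1) ^ n := by ring
    rw [hfact, hpow]
    have hnn : (0 : ℝ) < (n : ℝ) ^ n := by positivity
    have hF : (0 : ℝ) < (Nat.factorial n : ℝ) := by exact_mod_cast Nat.factorial_pos n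
    calc (Nat.factorial n : ℝ) * ((n : ℝ) ^ n)⁻¹ * (((n : ℝ) + 1) * ((n : ℝ) + 1) ^ n)
          ≤ (Nat.factorial n : ℝ) * ((n : ℝ) ^ n)⁻¹ * (((n : ℝ) + 1) * (Real.exp 1 * (n : ℝ) ^ n)) := by
            apply mul_le_mul_of_nonneg_left _ (by positivity)
            apply mul_le_mul_of_nonneg_left hstep (by positivity)
        _ = Real.exp 1 * (((n : ℝ) + 1) * Nat.factorial n) := by
            field_simp
  have key : ∀ l, f l ≤ g l := by
    intro l
    have e1 : n + 2 + l - 1 = n + 1 + l := by omega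
    have e2 : n + 2 + l - n = l + 2 := by omega
    have hF : (0 : ℝ) < (Nat.factorial n : ℝ) := by exact_mod_cast Nat.factorial_pos n
    have hG : (0 : ℝ) < (Nat.factorial (l + 2) : ℝ) := by exact_mod_cast Nat.factorial_pos (l+2)
    simp only [hf, hg, e1, e2, hzpow]
    rw [mul_add]
    apply add_le_add
    · -- first part
      have hxpow : x ^ (n + 2 + l) = x ^ (n + 2) * x ^ l := by rw [← pow_add]
      have hnp : ((n : ℝ) + 1) ^ (n + 1 + l) = ((n : ℝ) + 1) ^ (n + 1) * ((n : ℝ) + 1) ^ l := by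
        rw [← pow_add]
      have hgeo : (((n : ℝ) + 1) * x) ^ l ≤ (1 / 2) ^ l :=
        pow_le_pow_left₀ (by positivity) (by push_cast at hnx ⊢; linarith) l
      calc x ^ (n + 2 + l) * (Nat.factorial n : ℝ) * (((n : ℝ) ^ n)⁻¹ * ((n : ℝ) + 1) ^ (n + 1 + l))
          = ((Nat.factorial n : ℝ) * ((n : ℝ) ^ n)⁻¹ * ((n : ℝ) + 1) ^ (n + 1)) * x ^ (n + 2) *
              (((n : ℝ) + 1) * x) ^ l := by
            rw [hxpow, hnp, mul_pow]; ring
        _ ≤ (Real.exp 1 * (Nat.factorial (n + 1) : ℝ)) * x ^ (n + 2) * (1 / 2) ^ l := by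
            apply mul_le_mul _ hgeo (by positivity) (by positivity)
            apply mul_le_mul_of_nonneg_right hA (by positivity)
        _ = Real.exp 1 * C * (1 / 2) ^ l := by rw [hC]; ring
    · -- second part
      have haux := aux_b n hn x hx hnx l
      have hxpow : x ^ (n + 2 + l) = x ^ (n + 2) * x ^ l := by rw [← pow_add]
      calc x ^ (n + 2 + l) * (Nat.factorial n : ℝ) *
            ((3 / 2 : ℝ) * (Nat.factorial (n + 1 + l) : ℝ) /
              ((Nat.factorial n : ℝ) * (Nat.factorial (l + 2) : ℝ)))
          = (3 / 2) * x ^ (n + 2) *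
              (x ^ l * (Nat.factorial (n + 1 + l) : ℝ) / (Nat.factorial (l + 2) : ℝ)) := by
            rw [hxpow]; field_simp
        _ ≤ (3 / 2) * x ^ (n + 2) * ((Nat.factorial (n + 1) : ℝ) / 2 * (1 / 4) ^ l) := by
            apply mul_le_mul_of_nonneg_left haux (by positivity)
        _ = 3 / 4 * C * (1 / 4) ^ l := by rw [hC]; ring
  have hs2 : Summable (fun l : ℕ => Real.exp 1 * C * (1 / 2 : ℝ) ^ l) :=
    (summable_geometric_of_lt_one (by norm_num) (by norm_num)).mul_left _
  have hs4 : Summable (fun l : ℕ => 3 / 4 * C * (1 / 4 : ℝ) ^ l) :=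
    (summable_geometric_of_lt_one (by norm_num) (by norm_num)).mul_left _
  have hgs : Summable g := by
    simpa [hg] using hs2.add hs4
  have hfs : Summable f := Summable.of_nonneg_of_le hfnn key hgs
  refine ⟨hfs, ?_⟩
  have ht2 : ∑' l : ℕ, (1 / 2 : ℝ) ^ l = 2 := by
    rw [tsum_geometric_of_lt_one (by norm_num) (by norm_num)]; norm_num
  have ht4 : ∑' l : ℕ, (1 / 4 : ℝ) ^ l = 4 / 3 := by
    rw [tsum_geometric_of_lt_one (by norm_num) (by norm_num)]; norm_num
  calc ∑' l, f l ≤ ∑' l, g l := Summable.tsum_le_tsum key hfs hgs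
    _ = Real.exp 1 * C * 2 + 3 / 4 * C * (4 / 3) := by
        rw [hg, Summable.tsum_add hs2 hs4, tsum_mul_left, tsum_mul_left, ht2, ht4]
    _ ≤ (2 * Real.exp 1 + 3 / 2) * C := by nlinarith [hCpos]
    _ = (2 * Real.exp 1 + 3 / 2) * (Nat.factorial (n + 1) : ℝ) * x ^ (n + 2) := by
        rw [hC]; ring
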